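/- Let G be a Z2-graded Lie algebra over a field k (G = G0 ⊕ G1 as vector spaces, [G0,G0] ⊆ G0, [G0,G1] ⊆ G1) with [G1,G1] = 0. Let G₋ be a subspace (not necessarily a subalgebra) with G = G0 ⊕ G₋ as vector spaces, let π₊ : G → G0 be the projection onto G0 along G₋, and let H be the linear span of {π₊([a,b]) : a, b ∈ G₋}. Assume [H, G0] ⊆ G0 and [H, G₋] ⊆ G₋. Define X*Y = [π₊(X), Y] for X, Y ∈ G1 (which lies in G1). Then the operation * satisfies identity (3.1): [V,X,Y*Z] = [V,X,Y]*Z + Y*[V,X,Z] for all V, X, Y, Z ∈ G1; that is, G1 is an SS-algebra. -/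
import Mathlib


/-- Let `G = G0 ⊕ G1` be a Z2-graded Lie algebra with `[G1,G1] = 0`,
let `G₋` be a subspace complement of `G0` with projection `π₊` onto `G0` along `G₋`,
and let `H = span{π₊([a,b]) : a,b ∈ G₋}` satisfy `[H,G0] ⊆ G0`, `[H,G₋] ⊆ G₋`.
Then `X*Y = [π₊(X),Y]` satisfies the SS-identity (3.1) on `G1`. -/
theorem stmt_4 {k G : Type*} [Field k] [LieRing G] [LieAlgebra k G]
    (G0 G1 Gm : Submodule k G)
    (hG01 : IsCompl G0 G1)
    (h00 : ∀ x ∈ G0, ∀ y ∈ G0, ⁅x, y⁆ ∈ G0)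
    (h01 : ∀ x ∈ G0, ∀ y ∈ G1, ⁅x, y⁆ ∈ G1)
    (h11 : ∀ x ∈ G1, ∀ y ∈ G1, ⁅x, y⁆ = 0)
    (hG0m : IsCompl G0 Gm)
    (π : G →ₗ[k] G)
    (hπ0 : ∀ x, π x ∈ G0)
    (hπm : ∀ x, x - π x ∈ Gm)
    (H : Submodule k G)
    (hH : H = Submodule.span k {x | ∃ a ∈ Gm, ∃ b ∈ Gm, x = π ⁅a, b⁆})
    (hH0 : ∀ h ∈ H, ∀ x ∈ G0, ⁅h, x⁆ ∈ G0)
    (hHm : ∀ h ∈ H, ∀ x ∈ Gm, ⁅h, x⁆ ∈ Gm)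
    (mul : G → G → G)
    (hmul : ∀ X Y, mul X Y = ⁅π X, Y⁆)
    (As : G → G → G → G)
    (hAs : ∀ X Y Z, As X Y Z = mul (mul X Y) Z - mul X (mul Y Z))
    (tri : G → G → G → G)
    (htri : ∀ X Y Z, tri X Y Z = As X Y Z - As Y X Z) :
    ∀ V ∈ G1, ∀ X ∈ G1, ∀ Y ∈ G1, ∀ Z ∈ G1,
      tri V X (mul Y Z) = mul (tri V X Y) Z + mul Y (tri V X Z) := by
  -- π is identity on G0
  have hπ_id : ∀ x ∈ G0, π x = x := by
    intro x hx
    have h1 : x - π x ∈ G0 := Submodule.sub_mem _ hx (hπ0 x)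
    have h3 : x - π x = 0 := (Submodule.disjoint_def.mp hG0m.disjoint) _ h1 (hπm x)
    have := sub_eq_zero.mp h3
    exact this.symm
  -- π is zero on Gm
  have hπ_zero : ∀ x ∈ Gm, π x = 0 := by
    intro x hx
    have h1 : π x ∈ Gm := by
      have : π x = x - (x - π x) := by abel
      rw [this]; exact Submodule.sub_mem _ hx (hπm x)
    exact (Submodule.disjoint_def.mp hG0m.disjoint) _ (hπ0 x) h1
  -- key: for h ∈ H, π ⁅h, y⁆ = ⁅h, π y⁆
  have hkey : ∀ h ∈ H, ∀ y, π ⁅h, y⁆ = ⁅h, π y⁆ := by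
    intro h hh y
    have hdec : ⁅h, y⁆ = ⁅h, π y⁆ + ⁅h, y - π y⁆ := by rw [← lie_add]; congr 1; abel
    rw [hdec, map_add, hπ_id _ (hH0 h hh _ (hπ0 y)), hπ_zero _ (hHm h hh _ (hπm y)),
      add_zero]
  intro V hV X hX Y hY Z hZ
  set a := V - π V with ha
  set b := X - π X with hb
  set c := π ⁅a, b⁆ with hc
  have hcH : c ∈ H := by
    rw [hH]
    exact Submodule.subset_span ⟨a, hπm V, b, hπm X, rfl⟩
  have hVX : ⁅V, X⁆ = 0 := h11 V hV X hX
  -- tri V X W = ⁅-c, W⁆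
  have htri_eq : ∀ W, tri V X W = -⁅c, W⁆ := by
    intro W
    have hab : ⁅π V, X⁆ - ⁅π X, V⁆ = ⁅π V, π X⁆ - ⁅a, b⁆ := by
      have hskew : ⁅π X, V⁆ = -⁅V, π X⁆ := by rw [← lie_skew V (π X), neg_neg]
      rw [ha, hb, sub_lie, lie_sub, lie_sub, hVX, hskew]
      abel
    have hπab : π ⁅π V, X⁆ - π ⁅π X, V⁆ = ⁅π V, π X⁆ - c := by
      rw [← map_sub, hab, map_sub, hπ_id _ (h00 _ (hπ0 V) _ (hπ0 X)), hc]
    have hlie : ⁅π V, ⁅π X, W⁆⁆ - ⁅π X, ⁅π V, W⁆⁆ = ⁅⁅π V, π X⁆, W⁆ := by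
      rw [lie_lie]
    rw [htri, hAs, hAs, hmul, hmul, hmul, hmul, hmul, hmul, hmul, hmul]
    have : ⁅π ⁅π V, X⁆, W⁆ - ⁅π ⁅π X, V⁆, W⁆ = ⁅⁅π V, π X⁆ - c, W⁆ := by
      rw [← sub_lie, hπab]
    rw [show ⁅π ⁅π V, X⁆, W⁆ - ⁅π V, ⁅π X, W⁆⁆ - (⁅π ⁅π X, V⁆, W⁆ - ⁅π X, ⁅π V, W⁆⁆)
        = (⁅π ⁅π V, X⁆, W⁆ - ⁅π ⁅π X, V⁆, W⁆) - (⁅π V, ⁅π X, W⁆⁆ - ⁅π X, ⁅π V, W⁆⁆) by abel,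
      this, hlie, sub_lie]
    abel
  rw [htri_eq, htri_eq, htri_eq, hmul, hmul, hmul]
  rw [show π (-⁅c, Y⁆) = -⁅c, π Y⁆ by rw [map_neg, hkey c hcH]]
  rw [neg_lie, lie_neg, show ⁅c, ⁅π Y, Z⁆⁆ = ⁅⁅c, π Y⁆, Z⁆ + ⁅π Y, ⁅c, Z⁆⁆ from leibniz_lie c (π Y) Z]
  abel
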